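/- Lower bound for improvement under d^{π_old}: if KL(π_new(·|s) ‖ π_old(·|s)) ≤ α for every state s, then η_τ(π_new) − η_τ(π_old) ≥ (1/(1−γ))·E_{S∼d^{π_old}}[ ∑_a π_new(a|S) A_τ^{π_old}(S,a) − τ·KL(π_new‖π_old)(S) − 4√2 · V_{τ,max} · √α ], where V_{τ,max} = (r_max + τ log|A|)/(1−γ). -/

import Mathlib

open Finset Real Set

noncomputable def psi (t : ℝ) : ℝ := Real.log t - 3/2 * ((t-1)*(t+5)/(t+2)^2)
noncomputable def phi (t : ℝ) : ℝ := t * Real.log t - t + 1 - 3/2 * ((t-1)^2/(t+2))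

lemma hasDerivAt_psi {t : ℝ} (ht : 0 < t) :
    HasDerivAt psi (1/t - 27/(t+2)^3) t := by
  have hne : t + 2 ≠ 0 := by positivity
  have h1 : HasDerivAt (fun t : ℝ => (t-1)*(t+5)) (2*t+4) t := by
    have := ((hasDerivAt_id t).sub_const 1).mul ((hasDerivAt_id t).add_const 5)
    exact this.congr_deriv (by simp [id]; try ring)
  have h2 : HasDerivAt (fun t : ℝ => (t+2)^2) (2*(t+2)) t := by
    have := ((hasDerivAt_id t).add_const 2).pow 2
    exact this.congr_deriv (by simp [id]; try ring)
  have h3 := h1.div h2 (by positivity)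
  have h4 := (Real.hasDerivAt_log (ne_of_gt ht)).sub (h3.const_mul (3/2))
  refine h4.congr_deriv ?_
  field_simp
  ring
lemma hasDerivAt_phi {t : ℝ} (ht : 0 < t) : HasDerivAt phi (psi t) t := by
  have hne : t + 2 ≠ 0 := by positivity
  have h1 : HasDerivAt (fun t : ℝ => (t-1)^2) (2*(t-1)) t := by
    have := ((hasDerivAt_id t).sub_const 1).pow 2
    exact this.congr_deriv (by simp [id]; try ring)
  have h2 : HasDerivAt (fun t : ℝ => t + 2) 1 t := (hasDerivAt_id t).add_const 2
  have h3 := h1.div h2 hne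
  have hlog : HasDerivAt (fun t : ℝ => t * Real.log t) (Real.log t + 1) t := by
    have := (hasDerivAt_id t).mul (Real.hasDerivAt_log (ne_of_gt ht))
    exact this.congr_deriv (by field_simp; simp only [id]; ring)
  have h4 := ((hlog.sub (hasDerivAt_id t)).add_const 1).sub (h3.const_mul (3/2))
  refine h4.congr_deriv ?_
  unfold psi
  field_simp
  ring



lemma psi_deriv_nonneg {t : ℝ} (ht : 0 < t) : 0 ≤ 1/t - 27/(t+2)^3 := by
  rw [sub_nonneg, div_le_div_iff₀ (by positivity) ht]
  nlinarith [sq_nonneg (t-1), sq_nonneg t, mul_pos ht ht]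

lemma psi_cont : ContinuousOn psi (Ioi 0) := by
  intro x hx
  exact ((hasDerivAt_psi hx).continuousAt).continuousWithinAt

lemma psi_one : psi 1 = 0 := by simp [psi]

lemma psi_nonneg {t : ℝ} (ht : 1 ≤ t) : 0 ≤ psi t := by
  have hmono : MonotoneOn psi (Ici 1) := by
    apply monotoneOn_of_deriv_nonneg (convex_Ici 1)
    · exact psi_cont.mono (fun x hx => Set.mem_Ioi.mpr (lt_of_lt_of_le one_pos hx))
    · intro x hx
      rw [interior_Ici] at hx
      exact (hasDerivAt_psi (lt_trans one_pos hx)).differentiableAt.differentiableWithinAt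
    · intro x hx
      rw [interior_Ici] at hx
      rw [(hasDerivAt_psi (lt_trans one_pos hx)).deriv]
      exact psi_deriv_nonneg (lt_trans one_pos hx)
  have := hmono (self_mem_Ici) (by exact ht) ht
  rwa [psi_one] at this

lemma psi_nonpos {t : ℝ} (ht0 : 0 < t) (ht : t ≤ 1) : psi t ≤ 0 := by
  have hmono : MonotoneOn psi (Ioc 0 1) := by
    apply monotoneOn_of_deriv_nonneg (convex_Ioc 0 1)
    · exact psi_cont.mono (fun x hx => hx.1)
    · intro x hx
      rw [interior_Ioc] at hx
      exact (hasDerivAt_psi hx.1).differentiableAt.differentiableWithinAt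
    · intro x hx
      rw [interior_Ioc] at hx
      rw [(hasDerivAt_psi hx.1).deriv]
      exact psi_deriv_nonneg hx.1
  have := hmono ⟨ht0, ht⟩ ⟨one_pos, le_refl 1⟩ ht
  rwa [psi_one] at this

lemma phi_one : phi 1 = 0 := by simp [phi]

lemma phi_nonneg {t : ℝ} (ht : 0 < t) : 0 ≤ phi t := by
  have hcont : ContinuousOn phi (Ioi 0) := fun x hx =>
    ((hasDerivAt_phi hx).continuousAt).continuousWithinAt
  rcases le_or_gt 1 t with h | h
  · have hmono : MonotoneOn phi (Ici 1) := by
      apply monotoneOn_of_deriv_nonneg (convex_Ici 1)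
      · exact hcont.mono (fun x hx => Set.mem_Ioi.mpr (lt_of_lt_of_le one_pos hx))
      · intro x hx
        rw [interior_Ici] at hx
        exact (hasDerivAt_phi (lt_trans one_pos hx)).differentiableAt.differentiableWithinAt
      · intro x hx
        rw [interior_Ici] at hx
        rw [(hasDerivAt_phi (lt_trans one_pos hx)).deriv]
        exact psi_nonneg hx.le
    have := hmono self_mem_Ici h h
    rwa [phi_one] at this
  · have hanti : AntitoneOn phi (Ioc 0 1) := by
      apply antitoneOn_of_deriv_nonpos (convex_Ioc 0 1)
      · exact hcont.mono (fun x hx => hx.1)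
      · intro x hx
        rw [interior_Ioc] at hx
        exact (hasDerivAt_phi hx.1).differentiableAt.differentiableWithinAt
      · intro x hx
        rw [interior_Ioc] at hx
        rw [(hasDerivAt_phi hx.1).deriv]
        exact psi_nonpos hx.1 hx.2.le
    have := hanti ⟨ht, h.le⟩ ⟨one_pos, le_refl 1⟩ h.le
    rwa [phi_one] at this

lemma key_ineq {t : ℝ} (ht : 0 < t) :
    3*(t-1)^2/(2*(t+2)) ≤ t * Real.log t - t + 1 := by
  have := phi_nonneg ht
  unfold phi at this
  have hne : t + 2 ≠ 0 := by positivity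
  have e : 3*(t-1)^2/(2*(t+2)) = 3/2 * ((t-1)^2/(t+2)) := by
    field_simp
  linarith [this, e.le]

lemma pair_ineq {x y : ℝ} (hx : 0 < x) (hy : 0 < y) :
    3*(x-y)^2/(2*(x+2*y)) ≤ x * Real.log (x/y) - x + y := by
  have h := key_ineq (t := x/y) (by positivity)
  have hy' : y ≠ 0 := ne_of_gt hy
  have hpos : 0 < x + 2*y := by positivity
  have hpos2 : 0 < x/y + 2 := by positivity
  have hmul := mul_le_mul_of_nonneg_left h hy.le
  have e1 : y * (x/y * Real.log (x/y) - x/y + 1) = x * Real.log (x/y) - x + y := by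
    field_simp
  have e2 : y * (3*(x/y-1)^2/(2*(x/y+2))) = 3*(x-y)^2/(2*(x+2*y)) := by
    rw [eq_div_iff (by positivity)]
    field_simp
  rw [e1, e2] at hmul
  exact hmul

lemma pinsker {A : Type*} [Fintype A] (p q : A → ℝ)
    (hp : ∀ a, 0 < p a) (hq : ∀ a, 0 < q a)
    (hp1 : ∑ a, p a = 1) (hq1 : ∑ a, q a = 1) :
    (∑ a, |p a - q a|)^2 ≤ 2 * ∑ a, p a * Real.log (p a / q a) := by
  set Sq : A → ℝ := fun a => (p a - q a)^2 / (p a + 2 * q a) with hSq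
  have hden : ∀ a, (0:ℝ) < p a + 2 * q a := fun a => by have := hp a; have := hq a; linarith
  have h1 : ∀ a, 3/2 * Sq a ≤ p a * Real.log (p a / q a) - p a + q a := by
    intro a
    have := pair_ineq (hp a) (hq a)
    have e : 3*(p a - q a)^2/(2*(p a + 2*q a)) = 3/2 * Sq a := by
      rw [hSq]; field_simp [ne_of_gt (hden a)]
    linarith [this, e.ge]
  have h2 : 3/2 * ∑ a, Sq a ≤ ∑ a, p a * Real.log (p a / q a) := by
    have hle : ∑ a, 3/2 * Sq a ≤ ∑ a, (p a * Real.log (p a / q a) - p a + q a) :=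
      Finset.sum_le_sum (fun a _ => h1 a)
    rw [Finset.mul_sum]
    calc ∑ a, 3/2 * Sq a ≤ ∑ a, (p a * Real.log (p a / q a) - p a + q a) := hle
      _ = (∑ a, p a * Real.log (p a / q a)) - 1 + 1 := by
          rw [Finset.sum_add_distrib, Finset.sum_sub_distrib, hp1, hq1]
      _ = ∑ a, p a * Real.log (p a / q a) := by ring
  have hCS : (∑ a, |p a - q a|)^2 ≤ (∑ a, (p a + 2 * q a)) * ∑ a, Sq a := by
    have := Finset.sum_mul_sq_le_sq_mul_sq Finset.univ
      (fun a => Real.sqrt (p a + 2 * q a)) (fun a => |p a - q a| / Real.sqrt (p a + 2 * q a))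
    have e1 : ∀ a : A, Real.sqrt (p a + 2 * q a) * (|p a - q a| / Real.sqrt (p a + 2 * q a))
        = |p a - q a| := by
      intro a
      rw [mul_div_cancel₀]
      exact ne_of_gt (Real.sqrt_pos.2 (hden a))
    have e2 : ∀ a : A, (Real.sqrt (p a + 2 * q a))^2 = p a + 2 * q a := fun a =>
      Real.sq_sqrt (hden a).le
    have e3 : ∀ a : A, (|p a - q a| / Real.sqrt (p a + 2 * q a))^2 = Sq a := by
      intro a
      rw [div_pow, sq_abs, e2, hSq]
    simp only [e1, e2, e3] at this
    exact this
  have hsum3 : (∑ a, (p a + 2 * q a)) = 3 := by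
    rw [Finset.sum_add_distrib, hp1, ← Finset.mul_sum, hq1]; ring
  rw [hsum3] at hCS
  linarith

lemma ent_nonneg {A : Type*} [Fintype A] (p : A → ℝ)
    (hp : ∀ a, 0 < p a) (hp1 : ∑ a, p a = 1) :
    ∑ a, p a * Real.log (p a) ≤ 0 := by
  apply Finset.sum_nonpos
  intro a _
  have hle1 : p a ≤ 1 := by
    rw [← hp1]
    exact Finset.single_le_sum (fun b _ => (hp b).le) (Finset.mem_univ a)
  exact mul_nonpos_of_nonneg_of_nonpos (hp a).le (Real.log_nonpos (hp a).le hle1)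

lemma ent_le_log_card {A : Type*} [Fintype A] [Nonempty A] (p : A → ℝ)
    (hp : ∀ a, 0 < p a) (hp1 : ∑ a, p a = 1) :
    -∑ a, p a * Real.log (p a) ≤ Real.log (Fintype.card A) := by
  set n : ℝ := (Fintype.card A : ℝ) with hn
  have hnpos : (0:ℝ) < n := by
    rw [hn]; exact_mod_cast Fintype.card_pos
  have key : ∀ a : A, p a * (-Real.log n - Real.log (p a)) ≤ 1/n - p a := by
    intro a
    have hpa := hp a
    have hx : (0:ℝ) < 1/(n * p a) := by positivity
    have hlog := Real.log_le_sub_one_of_pos hx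
    have e : Real.log (1/(n * p a)) = -Real.log n - Real.log (p a) := by
      rw [one_div, Real.log_inv, Real.log_mul (ne_of_gt hnpos) (ne_of_gt (hp a))]
      ring
    have := mul_le_mul_of_nonneg_left hlog (hp a).le
    rw [e] at this
    calc p a * (-Real.log n - Real.log (p a)) ≤ p a * (1/(n * p a) - 1) := this
      _ = 1/n - p a := by
          field_simp
  have hsum : ∑ a : A, (p a * (-Real.log n - Real.log (p a))) ≤ ∑ a : A, (1/n - p a) :=
    Finset.sum_le_sum (fun a _ => key a)
  have e1 : ∑ a : A, (p a * (-Real.log n - Real.log (p a)))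
      = -Real.log n - ∑ a, p a * Real.log (p a) := by
    simp only [mul_sub, mul_neg, Finset.sum_sub_distrib, Finset.sum_neg_distrib,
      ← Finset.sum_mul, hp1]
    ring
  have e2 : ∑ a : A, (1/n - p a) = 0 := by
    rw [Finset.sum_sub_distrib, hp1, Finset.sum_const, Finset.card_univ, nsmul_eq_mul]
    rw [hn]
    field_simp
    norm_num
  rw [e1, e2] at hsum
  linarith

lemma value_bound {S A : Type*} [Fintype S] [Fintype A] [Nonempty S] [Nonempty A]
    (P : S → A → S → ℝ) (hP0 : ∀ s a s', 0 ≤ P s a s') (hP1 : ∀ s a, ∑ s', P s a s' = 1)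
    (r : S → A → ℝ) (rmax : ℝ) (hr : ∀ s a, |r s a| ≤ rmax)
    (γ : ℝ) (hγ0 : 0 ≤ γ) (hγ1 : γ < 1)
    (τ : ℝ) (hτ : 0 ≤ τ)
    (pol : S → A → ℝ) (hpol : ∀ s a, 0 < pol s a) (hpol1 : ∀ s, ∑ a, pol s a = 1)
    (V : S → ℝ)
    (hV : ∀ s, V s = ∑ a, pol s a *
      (r s a + γ * (∑ s', P s a s' * V s') - τ * Real.log (pol s a))) :
    ∀ s, |V s| ≤ (rmax + τ * Real.log (Fintype.card A)) / (1 - γ) := by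
  obtain ⟨s₀, -, hmax⟩ := Finset.exists_max_image Finset.univ (fun s => |V s|)
    Finset.univ_nonempty
  set M := |V s₀| with hM
  have hMnn : 0 ≤ M := abs_nonneg _
  have hmax' : ∀ s, |V s| ≤ M := fun s => hmax s (Finset.mem_univ s)
  have hlogn : 0 ≤ Real.log (Fintype.card A) := by
    apply Real.log_nonneg
    exact_mod_cast Fintype.card_pos
  have hsumPV : ∀ s a, |∑ s', P s a s' * V s'| ≤ M := by
    intro s a
    calc |∑ s', P s a s' * V s'| ≤ ∑ s', |P s a s' * V s'| := Finset.abs_sum_le_sum_abs _ _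
      _ ≤ ∑ s', P s a s' * M := by
          apply Finset.sum_le_sum
          intro s' _
          rw [abs_mul, abs_of_nonneg (hP0 s a s')]
          exact mul_le_mul_of_nonneg_left (hmax' s') (hP0 s a s')
      _ = M := by rw [← Finset.sum_mul, hP1]; ring
  have hQb : ∀ s a, |r s a + γ * ∑ s', P s a s' * V s'| ≤ rmax + γ * M := by
    intro s a
    have h1 := abs_add_le (r s a) (γ * ∑ s', P s a s' * V s')
    have h2 : |γ * ∑ s', P s a s' * V s'| = γ * |∑ s', P s a s' * V s'| := by
      rw [abs_mul, abs_of_nonneg hγ0]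
    have h3 := hsumPV s a
    have h4 := hr s a
    nlinarith
  have hsplit : V s₀ = (∑ a, pol s₀ a * (r s₀ a + γ * ∑ s', P s₀ a s' * V s'))
      - τ * ∑ a, pol s₀ a * Real.log (pol s₀ a) := by
    rw [hV s₀, Finset.mul_sum, ← Finset.sum_sub_distrib]
    apply Finset.sum_congr rfl
    intro a _
    ring
  have hub : ∑ a, pol s₀ a * (r s₀ a + γ * ∑ s', P s₀ a s' * V s') ≤ rmax + γ * M := by
    calc ∑ a, pol s₀ a * (r s₀ a + γ * ∑ s', P s₀ a s' * V s')
        ≤ ∑ a, pol s₀ a * (rmax + γ * M) := by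
          apply Finset.sum_le_sum
          intro a _
          exact mul_le_mul_of_nonneg_left (le_trans (le_abs_self _) (hQb s₀ a)) (hpol s₀ a).le
      _ = rmax + γ * M := by rw [← Finset.sum_mul, hpol1]; ring
  have hlb : -(rmax + γ * M) ≤ ∑ a, pol s₀ a * (r s₀ a + γ * ∑ s', P s₀ a s' * V s') := by
    calc -(rmax + γ * M) = ∑ a, pol s₀ a * (-(rmax + γ * M)) := by
          rw [← Finset.sum_mul, hpol1]; ring
      _ ≤ ∑ a, pol s₀ a * (r s₀ a + γ * ∑ s', P s₀ a s' * V s') := by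
          apply Finset.sum_le_sum
          intro a _
          apply mul_le_mul_of_nonneg_left _ (hpol s₀ a).le
          have := hQb s₀ a
          have := neg_abs_le (r s₀ a + γ * ∑ s', P s₀ a s' * V s')
          linarith
  have hent1 : 0 ≤ -(τ * ∑ a, pol s₀ a * Real.log (pol s₀ a)) := by
    have := ent_nonneg (fun a => pol s₀ a) (hpol s₀) (hpol1 s₀)
    nlinarith
  have hent2 : -(τ * ∑ a, pol s₀ a * Real.log (pol s₀ a)) ≤ τ * Real.log (Fintype.card A) := by
    have := ent_le_log_card (fun a => pol s₀ a) (hpol s₀) (hpol1 s₀)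
    nlinarith
  have habs : M ≤ rmax + γ * M + τ * Real.log (Fintype.card A) := by
    rw [hM, abs_le]
    constructor
    · nlinarith [mul_nonneg hτ hlogn]
    · nlinarith
  intro s
  have h1γ : 0 < 1 - γ := by linarith
  calc |V s| ≤ M := hmax' s
    _ ≤ (rmax + τ * Real.log (Fintype.card A)) / (1 - γ) := by
        rw [le_div_iff₀ h1γ]
        nlinarith

lemma d_nonneg {S A : Type*} [Fintype S] [Fintype A]
    (P : S → A → S → ℝ) (hP0 : ∀ s a s', 0 ≤ P s a s') (hP1 : ∀ s a, ∑ s', P s a s' = 1)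
    (γ : ℝ) (hγ0 : 0 ≤ γ) (hγ1 : γ < 1)
    (ρ : S → ℝ) (hρ0 : ∀ s, 0 ≤ ρ s)
    (pol : S → A → ℝ) (hpol : ∀ s a, 0 < pol s a) (hpol1 : ∀ s, ∑ a, pol s a = 1)
    (d : S → ℝ)
    (hd : ∀ s, d s = (1 - γ) * ρ s + γ * ∑ s', ∑ a, d s' * (pol s' a * P s' a s)) :
    ∀ s, 0 ≤ d s := by
  by_contra hcon
  push_neg at hcon
  obtain ⟨s₁, hs₁⟩ := hcon
  set N : Finset S := Finset.univ.filter (fun s => d s < 0) with hN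
  have hs₁N : s₁ ∈ N := by simp [hN, hs₁]
  have hNneg : ∀ s ∈ N, d s < 0 := by
    intro s hs
    simp only [hN, Finset.mem_filter] at hs
    exact hs.2
  set σ := ∑ s ∈ N, d s with hσ
  have hσneg : σ < 0 := Finset.sum_neg hNneg ⟨s₁, hs₁N⟩
  -- K s' := probability of landing in N from s'
  set K : S → ℝ := fun s' => ∑ a, pol s' a * ∑ s ∈ N, P s' a s with hK
  have hK0 : ∀ s', 0 ≤ K s' := by
    intro s'
    apply Finset.sum_nonneg
    intro a _
    exact mul_nonneg (hpol s' a).le (Finset.sum_nonneg fun s _ => hP0 s' a s)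
  have hK1 : ∀ s', K s' ≤ 1 := by
    intro s'
    calc K s' ≤ ∑ a, pol s' a * 1 := by
          apply Finset.sum_le_sum
          intro a _
          apply mul_le_mul_of_nonneg_left _ (hpol s' a).le
          rw [← hP1 s' a]
          exact Finset.sum_le_sum_of_subset_of_nonneg (Finset.subset_univ N)
            (fun s _ _ => hP0 s' a s)
      _ = 1 := by simp [hpol1 s']
  have hswap : ∑ s ∈ N, (∑ s', ∑ a, d s' * (pol s' a * P s' a s)) = ∑ s', d s' * K s' := by
    rw [Finset.sum_comm]
    apply Finset.sum_congr rfl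
    intro s' _
    have : d s' * K s' = ∑ a, ∑ s ∈ N, d s' * (pol s' a * P s' a s) := by
      rw [hK, Finset.mul_sum]
      apply Finset.sum_congr rfl
      intro a _
      rw [Finset.mul_sum, Finset.mul_sum]
    rw [this, Finset.sum_comm]
  have hσeq : σ = (1 - γ) * ∑ s ∈ N, ρ s + γ * ∑ s', d s' * K s' := by
    rw [hσ]
    calc ∑ s ∈ N, d s
        = ∑ s ∈ N, ((1 - γ) * ρ s + γ * ∑ s', ∑ a, d s' * (pol s' a * P s' a s)) :=
          Finset.sum_congr rfl (fun s _ => hd s)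
      _ = (1 - γ) * ∑ s ∈ N, ρ s + γ * ∑ s ∈ N, (∑ s', ∑ a, d s' * (pol s' a * P s' a s)) := by
          rw [Finset.sum_add_distrib, Finset.mul_sum, Finset.mul_sum]
      _ = (1 - γ) * ∑ s ∈ N, ρ s + γ * ∑ s', d s' * K s' := by rw [hswap]
  have hKσ : σ ≤ ∑ s', d s' * K s' := by
    calc σ = ∑ s ∈ N, d s := hσ
      _ ≤ ∑ s ∈ N, d s * K s := by
          apply Finset.sum_le_sum
          intro s hs
          nlinarith [hNneg s hs, hK1 s, hK0 s]
      _ ≤ ∑ s', d s' * K s' := by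
          apply Finset.sum_le_sum_of_subset_of_nonneg (Finset.subset_univ N)
          intro s hs hsN
          simp only [hN, Finset.mem_filter, Finset.mem_univ, true_and, not_lt] at hsN
          exact mul_nonneg hsN (hK0 s)
  have hρN : 0 ≤ ∑ s ∈ N, ρ s := Finset.sum_nonneg fun s _ => hρ0 s
  nlinarith [hσeq, hKσ, hσneg, mul_le_mul_of_nonneg_left hKσ hγ0]

lemma visit_identity {S A : Type*} [Fintype S] [Fintype A]
    (P : S → A → S → ℝ)
    (γ : ℝ)
    (ρ : S → ℝ)
    (pol : S → A → ℝ)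
    (d : S → ℝ)
    (hd : ∀ s, d s = (1 - γ) * ρ s + γ * ∑ s', ∑ a, d s' * (pol s' a * P s' a s))
    (Δ : S → ℝ) :
    (1 - γ) * ∑ s, ρ s * Δ s
      = ∑ s, d s * (Δ s - γ * ∑ a, pol s a * ∑ s', P s a s' * Δ s') := by
  have key : ∀ s, (1 - γ) * ρ s = d s - γ * ∑ s', ∑ a, d s' * (pol s' a * P s' a s) := by
    intro s
    rw [hd s]
    ring
  have hswap : ∑ s, (∑ s', ∑ a, d s' * (pol s' a * P s' a s)) * Δ s
      = ∑ s', d s' * ∑ a, pol s' a * ∑ s, P s' a s * Δ s := by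
    have e1 : ∀ s, (∑ s', ∑ a, d s' * (pol s' a * P s' a s)) * Δ s
        = ∑ s', ∑ a, d s' * (pol s' a * P s' a s) * Δ s := by
      intro s
      rw [Finset.sum_mul]
      exact Finset.sum_congr rfl fun s' _ => by rw [Finset.sum_mul]
    simp only [e1]
    rw [Finset.sum_comm]
    apply Finset.sum_congr rfl
    intro s' _
    rw [Finset.mul_sum]
    rw [Finset.sum_comm]
    apply Finset.sum_congr rfl
    intro a _
    rw [Finset.mul_sum, Finset.mul_sum]
    apply Finset.sum_congr rfl
    intro s _
    ring
  calc (1 - γ) * ∑ s, ρ s * Δ s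
      = ∑ s, ((1 - γ) * ρ s) * Δ s := by
        rw [Finset.mul_sum]
        exact Finset.sum_congr rfl fun s _ => by ring
    _ = ∑ s, (d s - γ * ∑ s', ∑ a, d s' * (pol s' a * P s' a s)) * Δ s :=
        Finset.sum_congr rfl fun s _ => by rw [key s]
    _ = ∑ s, d s * Δ s - γ * ∑ s, (∑ s', ∑ a, d s' * (pol s' a * P s' a s)) * Δ s := by
        rw [Finset.mul_sum, ← Finset.sum_sub_distrib]
        exact Finset.sum_congr rfl fun s _ => by ring
    _ = ∑ s, d s * Δ s - γ * ∑ s', d s' * ∑ a, pol s' a * ∑ s, P s' a s * Δ s := by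
        rw [hswap]
    _ = ∑ s, d s * (Δ s - γ * ∑ a, pol s a * ∑ s', P s a s' * Δ s') := by
        rw [Finset.mul_sum, ← Finset.sum_sub_distrib]
        exact Finset.sum_congr rfl fun s _ => by ring

lemma avg_abs_le {S : Type*} [Fintype S] (w V : S → ℝ)
    (hw : ∀ s, 0 ≤ w s) (hw1 : ∑ s, w s = 1) (C : ℝ) (hV : ∀ s, |V s| ≤ C) :
    |∑ s, w s * V s| ≤ C := by
  calc |∑ s, w s * V s| ≤ ∑ s, |w s * V s| := Finset.abs_sum_le_sum_abs _ _
    _ ≤ ∑ s, w s * C := by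
        apply Finset.sum_le_sum
        intro s _
        rw [abs_mul, abs_of_nonneg (hw s)]
        exact mul_le_mul_of_nonneg_left (hV s) (hw s)
    _ = C := by rw [← Finset.sum_mul, hw1]; ring

/-- Lower bound for improvement under `d^{π_old}`: if
`KL(π_new(·|s) ‖ π_old(·|s)) ≤ α` for every state `s`, then
`η_τ(π_new) − η_τ(π_old) ≥ (1/(1−γ)) E_{S∼d^{π_old}}[∑ₐ π_new(a|S) A_τ^{π_old}(S,a)
  − τ·KL(π_new‖π_old)(S) − 4√2 · V_{τ,max} · √α]`
where `V_{τ,max} = (r_max + τ log|A|)/(1−γ)`. -/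
theorem improvement_lower_bound_dpiold
    {S A : Type*} [Fintype S] [Fintype A] [Nonempty S] [Nonempty A]
    (P : S → A → S → ℝ) (hP0 : ∀ s a s', 0 ≤ P s a s') (hP1 : ∀ s a, ∑ s', P s a s' = 1)
    (r : S → A → ℝ) (rmax : ℝ) (hr : ∀ s a, |r s a| ≤ rmax)
    (γ : ℝ) (hγ0 : 0 ≤ γ) (hγ1 : γ < 1)
    (ρ : S → ℝ) (hρ0 : ∀ s, 0 ≤ ρ s) (hρ1 : ∑ s, ρ s = 1)
    (τ : ℝ) (hτ : 0 ≤ τ)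
    (πold πnew : S → A → ℝ)
    (hπold : ∀ s a, 0 < πold s a) (hπold1 : ∀ s, ∑ a, πold s a = 1)
    (hπnew : ∀ s a, 0 < πnew s a) (hπnew1 : ∀ s, ∑ a, πnew s a = 1)
    (Vold : S → ℝ) (Qold : S → A → ℝ)
    (hQold : ∀ s a, Qold s a = r s a + γ * ∑ s', P s a s' * Vold s')
    (hVold : ∀ s, Vold s = ∑ a, πold s a * (Qold s a - τ * Real.log (πold s a)))
    (Vnew : S → ℝ)
    (hVnew : ∀ s, Vnew s = ∑ a, πnew s a *
      (r s a + γ * (∑ s', P s a s' * Vnew s') - τ * Real.log (πnew s a)))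
    -- normalized discounted state visitation distribution of the old policy
    (d : S → ℝ)
    (hd : ∀ s, d s = (1 - γ) * ρ s + γ * ∑ s', ∑ a, d s' * (πold s' a * P s' a s))
    (α : ℝ)
    (hα : ∀ s, (∑ a, πnew s a * Real.log (πnew s a / πold s a)) ≤ α) :
    (∑ s, ρ s * Vnew s) - (∑ s, ρ s * Vold s) ≥
      (1 / (1 - γ)) * ∑ s, d s *
        ((∑ a, πnew s a * (Qold s a - τ * Real.log (πold s a) - Vold s))
          - τ * (∑ a, πnew s a * Real.log (πnew s a / πold s a))
          - 4 * Real.sqrt 2 * ((rmax + τ * Real.log (Fintype.card A)) / (1 - γ))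
              * Real.sqrt α) := by
  have h1γ : 0 < 1 - γ := by linarith
  set Vm : ℝ := (rmax + τ * Real.log (Fintype.card A)) / (1 - γ) with hVm
  -- basic positivity facts
  have hlogn : 0 ≤ Real.log (Fintype.card A) := by
    apply Real.log_nonneg
    exact_mod_cast Fintype.card_pos
  have hrmax0 : 0 ≤ rmax := le_trans (abs_nonneg _) (hr Classical.ofNonempty Classical.ofNonempty)
  have hVm0 : 0 ≤ Vm := by
    rw [hVm]
    positivity
  have hrVm : rmax + γ * Vm ≤ Vm := by
    have hVmval : Vm * (1 - γ) = rmax + τ * Real.log (Fintype.card A) := by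
      rw [hVm]; field_simp
    nlinarith [mul_nonneg hτ hlogn]
  -- value function bounds
  have hVoldB : ∀ s, Vold s = ∑ a, πold s a *
      (r s a + γ * (∑ s', P s a s' * Vold s') - τ * Real.log (πold s a)) := by
    intro s
    rw [hVold s]
    exact Finset.sum_congr rfl fun a _ => by rw [hQold s a]
  have hVoldbd : ∀ s, |Vold s| ≤ Vm :=
    value_bound P hP0 hP1 r rmax hr γ hγ0 hγ1 τ hτ πold hπold hπold1 Vold hVoldB
  have hVnewbd : ∀ s, |Vnew s| ≤ Vm :=
    value_bound P hP0 hP1 r rmax hr γ hγ0 hγ1 τ hτ πnew hπnew hπnew1 Vnew hVnew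
  have hd0 : ∀ s, 0 ≤ d s := d_nonneg P hP0 hP1 γ hγ0 hγ1 ρ hρ0 πold hπold hπold1 d hd
  -- pointwise lower bound
  have hpt : ∀ s,
      ((Vnew s - Vold s) - γ * ∑ a, πold s a * ∑ s', P s a s' * (Vnew s' - Vold s'))
      ≥ (∑ a, πnew s a * (Qold s a - τ * Real.log (πold s a) - Vold s))
          - τ * (∑ a, πnew s a * Real.log (πnew s a / πold s a))
          - 4 * Real.sqrt 2 * Vm * Real.sqrt α := by
    intro s
    -- abbreviations for the seven atomic sums
    have hKLsplit : ∑ a, πnew s a * Real.log (πnew s a / πold s a)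
        = (∑ a, πnew s a * Real.log (πnew s a)) - ∑ a, πnew s a * Real.log (πold s a) := by
      rw [← Finset.sum_sub_distrib]
      refine Finset.sum_congr rfl fun a _ => ?_
      rw [Real.log_div (ne_of_gt (hπnew s a)) (ne_of_gt (hπold s a))]
      ring
    have hgsplit : (∑ a, πnew s a * (Qold s a - τ * Real.log (πold s a) - Vold s))
        = (∑ a, πnew s a * Qold s a) - τ * (∑ a, πnew s a * Real.log (πold s a)) - Vold s := by
      calc ∑ a, πnew s a * (Qold s a - τ * Real.log (πold s a) - Vold s)
          = ∑ a, (πnew s a * Qold s a - τ * (πnew s a * Real.log (πold s a))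
              - Vold s * πnew s a) := Finset.sum_congr rfl fun a _ => by ring
        _ = (∑ a, πnew s a * Qold s a) - τ * (∑ a, πnew s a * Real.log (πold s a))
              - Vold s * ∑ a, πnew s a := by
            rw [Finset.sum_sub_distrib, Finset.sum_sub_distrib, Finset.mul_sum, Finset.mul_sum]
        _ = _ := by rw [hπnew1 s]; ring
    have hVnews : Vnew s = (∑ a, πnew s a * (r s a + γ * ∑ s', P s a s' * Vnew s'))
        - τ * ∑ a, πnew s a * Real.log (πnew s a) := by
      rw [hVnew s]
      calc ∑ a, πnew s a * (r s a + γ * (∑ s', P s a s' * Vnew s') - τ * Real.log (πnew s a))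
          = ∑ a, (πnew s a * (r s a + γ * ∑ s', P s a s' * Vnew s')
              - τ * (πnew s a * Real.log (πnew s a))) := Finset.sum_congr rfl fun a _ => by ring
        _ = _ := by rw [Finset.sum_sub_distrib, Finset.mul_sum]
    have hVolds : Vold s = (∑ a, πold s a * Qold s a)
        - τ * ∑ a, πold s a * Real.log (πold s a) := by
      rw [hVold s]
      calc ∑ a, πold s a * (Qold s a - τ * Real.log (πold s a))
          = ∑ a, (πold s a * Qold s a - τ * (πold s a * Real.log (πold s a))) :=
            Finset.sum_congr rfl fun a _ => by ring
        _ = _ := by rw [Finset.sum_sub_distrib, Finset.mul_sum]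
    have hQdiff : ∀ a, γ * ∑ s', P s a s' * (Vnew s' - Vold s')
        = (r s a + γ * ∑ s', P s a s' * Vnew s') - Qold s a := by
      intro a
      rw [hQold s a]
      have e : ∑ s', P s a s' * (Vnew s' - Vold s')
          = (∑ s', P s a s' * Vnew s') - ∑ s', P s a s' * Vold s' := by
        rw [← Finset.sum_sub_distrib]
        exact Finset.sum_congr rfl fun s' _ => by ring
      rw [e]
      ring
    have hpold_term : γ * ∑ a, πold s a * ∑ s', P s a s' * (Vnew s' - Vold s')
        = (∑ a, πold s a * (r s a + γ * ∑ s', P s a s' * Vnew s'))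
          - ∑ a, πold s a * Qold s a := by
      calc γ * ∑ a, πold s a * ∑ s', P s a s' * (Vnew s' - Vold s')
          = ∑ a, πold s a * (γ * ∑ s', P s a s' * (Vnew s' - Vold s')) := by
            rw [Finset.mul_sum]
            exact Finset.sum_congr rfl fun a _ => by ring
        _ = ∑ a, (πold s a * (r s a + γ * ∑ s', P s a s' * Vnew s')
              - πold s a * Qold s a) := Finset.sum_congr rfl fun a _ => by rw [hQdiff a]; ring
        _ = _ := Finset.sum_sub_distrib _ _
    have hRHSsum : ∑ a, (πnew s a - πold s a) *
          (((r s a + γ * ∑ s', P s a s' * Vnew s') - Vnew s) - (Qold s a - Vold s))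
        = (∑ a, πnew s a * (r s a + γ * ∑ s', P s a s' * Vnew s'))
          - (∑ a, πold s a * (r s a + γ * ∑ s', P s a s' * Vnew s'))
          - (∑ a, πnew s a * Qold s a) + (∑ a, πold s a * Qold s a) := by
      calc ∑ a, (πnew s a - πold s a) *
            (((r s a + γ * ∑ s', P s a s' * Vnew s') - Vnew s) - (Qold s a - Vold s))
          = ∑ a, (πnew s a * (r s a + γ * ∑ s', P s a s' * Vnew s')
              - πold s a * (r s a + γ * ∑ s', P s a s' * Vnew s')
              - πnew s a * Qold s a + πold s a * Qold s a
              - (Vnew s - Vold s) * πnew s a + (Vnew s - Vold s) * πold s a) :=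
            Finset.sum_congr rfl fun a _ => by ring
        _ = (∑ a, πnew s a * (r s a + γ * ∑ s', P s a s' * Vnew s'))
              - (∑ a, πold s a * (r s a + γ * ∑ s', P s a s' * Vnew s'))
              - (∑ a, πnew s a * Qold s a) + (∑ a, πold s a * Qold s a)
              - (Vnew s - Vold s) * (∑ a, πnew s a) + (Vnew s - Vold s) * (∑ a, πold s a) := by
            simp only [Finset.sum_add_distrib, Finset.sum_sub_distrib, ← Finset.mul_sum]
        _ = _ := by rw [hπnew1 s, hπold1 s]; ring
    -- the exact identity
    have hident : ((Vnew s - Vold s) - γ * ∑ a, πold s a * ∑ s', P s a s' * (Vnew s' - Vold s'))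
        - ((∑ a, πnew s a * (Qold s a - τ * Real.log (πold s a) - Vold s))
          - τ * (∑ a, πnew s a * Real.log (πnew s a / πold s a)))
        = ∑ a, (πnew s a - πold s a) *
            (((r s a + γ * ∑ s', P s a s' * Vnew s') - Vnew s) - (Qold s a - Vold s)) := by
      rw [hpold_term, hgsplit, hKLsplit, hRHSsum]
      linarith [hVnews, hVolds]
    -- bound each |h a| by 4 Vm
    have hhb : ∀ a, |((r s a + γ * ∑ s', P s a s' * Vnew s') - Vnew s) - (Qold s a - Vold s)|
        ≤ 4 * Vm := by
      intro a
      have h2 : |r s a + γ * ∑ s', P s a s' * Vnew s'| ≤ rmax + γ * Vm := by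
        have hb := avg_abs_le (P s a) Vnew (hP0 s a) (hP1 s a) Vm hVnewbd
        have := abs_add_le (r s a) (γ * ∑ s', P s a s' * Vnew s')
        rw [abs_mul, abs_of_nonneg hγ0] at this
        have := hr s a
        nlinarith [mul_le_mul_of_nonneg_left hb hγ0]
      have h1 : |Qold s a| ≤ rmax + γ * Vm := by
        rw [hQold s a]
        have hb := avg_abs_le (P s a) Vold (hP0 s a) (hP1 s a) Vm hVoldbd
        have := abs_add_le (r s a) (γ * ∑ s', P s a s' * Vold s')
        rw [abs_mul, abs_of_nonneg hγ0] at this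
        have := hr s a
        nlinarith [mul_le_mul_of_nonneg_left hb hγ0]
      have h3 := hVnewbd s
      have h4 := hVoldbd s
      have e1 := abs_abs (r s a + γ * ∑ s', P s a s' * Vnew s')
      calc |((r s a + γ * ∑ s', P s a s' * Vnew s') - Vnew s) - (Qold s a - Vold s)|
          ≤ |r s a + γ * ∑ s', P s a s' * Vnew s'| + |Vnew s| + |Qold s a| + |Vold s| := by
            have t1 := abs_sub (r s a + γ * ∑ s', P s a s' * Vnew s') (Vnew s)
            have t2 := abs_sub (Qold s a) (Vold s)
            have t3 := abs_sub ((r s a + γ * ∑ s', P s a s' * Vnew s') - Vnew s)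
              (Qold s a - Vold s)
            linarith
        _ ≤ 4 * Vm := by linarith [hrVm]
    -- Pinsker / KL bound on the total variation
    have hL : (∑ a, |πnew s a - πold s a|) ≤ Real.sqrt 2 * Real.sqrt α := by
      have hp := pinsker (fun a => πnew s a) (fun a => πold s a)
        (hπnew s) (hπold s) (hπnew1 s) (hπold1 s)
      have hKLα := hα s
      have hL0 : 0 ≤ ∑ a, |πnew s a - πold s a| :=
        Finset.sum_nonneg fun a _ => abs_nonneg _
      calc (∑ a, |πnew s a - πold s a|)
          = Real.sqrt ((∑ a, |πnew s a - πold s a|)^2) := (Real.sqrt_sq hL0).symm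
        _ ≤ Real.sqrt (2 * α) := Real.sqrt_le_sqrt (by linarith)
        _ = Real.sqrt 2 * Real.sqrt α := Real.sqrt_mul (by norm_num) α
    -- bound on the correction term
    have hBbd : ∑ a, (πnew s a - πold s a) *
          (((r s a + γ * ∑ s', P s a s' * Vnew s') - Vnew s) - (Qold s a - Vold s))
        ≥ -(4 * Real.sqrt 2 * Vm * Real.sqrt α) := by
      have habs : |∑ a, (πnew s a - πold s a) *
            (((r s a + γ * ∑ s', P s a s' * Vnew s') - Vnew s) - (Qold s a - Vold s))|
          ≤ 4 * Vm * ∑ a, |πnew s a - πold s a| := by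
        calc |∑ a, (πnew s a - πold s a) *
              (((r s a + γ * ∑ s', P s a s' * Vnew s') - Vnew s) - (Qold s a - Vold s))|
            ≤ ∑ a, |(πnew s a - πold s a) *
              (((r s a + γ * ∑ s', P s a s' * Vnew s') - Vnew s) - (Qold s a - Vold s))| :=
              Finset.abs_sum_le_sum_abs _ _
          _ ≤ ∑ a, |πnew s a - πold s a| * (4 * Vm) := by
              apply Finset.sum_le_sum
              intro a _
              rw [abs_mul]
              exact mul_le_mul_of_nonneg_left (hhb a) (abs_nonneg _)
          _ = 4 * Vm * ∑ a, |πnew s a - πold s a| := by rw [← Finset.sum_mul]; ring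
      have h2 : 4 * Vm * (∑ a, |πnew s a - πold s a|)
          ≤ 4 * Vm * (Real.sqrt 2 * Real.sqrt α) :=
        mul_le_mul_of_nonneg_left hL (by linarith)
      have := neg_abs_le (∑ a, (πnew s a - πold s a) *
        (((r s a + γ * ∑ s', P s a s' * Vnew s') - Vnew s) - (Qold s a - Vold s)))
      have e : 4 * Vm * (Real.sqrt 2 * Real.sqrt α)
          = 4 * Real.sqrt 2 * Vm * Real.sqrt α := by ring
      linarith
    linarith [hident, hBbd]
  -- assemble with the visitation identity
  have hid := visit_identity P γ ρ πold d hd (fun s => Vnew s - Vold s)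
  have hlhs : (∑ s, ρ s * Vnew s) - (∑ s, ρ s * Vold s) = ∑ s, ρ s * (Vnew s - Vold s) := by
    rw [← Finset.sum_sub_distrib]
    exact Finset.sum_congr rfl fun s _ => by ring
  have hsum_ge : ∑ s, d s * ((Vnew s - Vold s)
        - γ * ∑ a, πold s a * ∑ s', P s a s' * (Vnew s' - Vold s'))
      ≥ ∑ s, d s *
        ((∑ a, πnew s a * (Qold s a - τ * Real.log (πold s a) - Vold s))
          - τ * (∑ a, πnew s a * Real.log (πnew s a / πold s a))
          - 4 * Real.sqrt 2 * Vm * Real.sqrt α) := by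
    apply Finset.sum_le_sum
    intro s _
    exact mul_le_mul_of_nonneg_left (hpt s) (hd0 s)
  have hfin : (∑ s, ρ s * Vnew s) - (∑ s, ρ s * Vold s)
      = (1 / (1 - γ)) * ∑ s, d s * ((Vnew s - Vold s)
        - γ * ∑ a, πold s a * ∑ s', P s a s' * (Vnew s' - Vold s')) := by
    rw [← hid, hlhs]
    field_simp
  rw [hfin, hVm] at *
  exact mul_le_mul_of_nonneg_left hsum_ge (by positivity)
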